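/- arXiv:2002.08071 — 4 statements merged into one kernel-verified Lean document; each statement's English description precedes it below -/
import Mathlib

section
/- Generalized adjoint method (constant parameters, integral loss): Let S > 0 and let f : [0,S] × ℝ^{n_z} × ℝ^{n_θ} → ℝ^{n_z} be continuously differentiable. Fix θ ∈ ℝ^{n_θ} and suppose z : [0,S] × ℝ^{n_θ} → ℝ^{n_z} is continuously differentiable, satisfies ∂z/∂s(s,θ) = f(s, z(s,θ), θ) for all s, and the initial condition z(0,θ) = z₀ is independent of θ; write v(s) = ∂z/∂θ(s,θ) ∈ ℝ^{n_z×n_θ} and assume v satisfies the variational equation v'(s) = (∂f/∂z)(s, z(s,θ), θ) v(s) + (∂f/∂θ)(s, z(s,θ), θ) with v(0) = 0. Let L : ℝ^{n_z} → ℝ and l : [0,S] × ℝ^{n_z} → ℝ be continuously differentiable and define the loss ℓ(θ) = L(z(S,θ)) + ∫₀ᔆ l(τ, z(τ,θ)) dτ. If a : [0,S] → ℝ^{n_z} is differentiable and satisfies the adjoint final-value problem a'(s)ᵀ = −a(s)ᵀ (∂f/∂z)(s, z(s,θ), θ) − (∂l/∂z)(s, z(s,θ)) with a(S)ᵀ =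 (∂L/∂z)(z(S,θ)), then the gradient of the loss is dℓ/dθ = ∫₀ᔆ a(τ)ᵀ (∂f/∂θ)(τ, z(τ,θ), θ) dτ. -/
open MeasureTheory Matrix

/-- The continuous linear map `w ↦ M *ᵥ w` given by a Jacobian matrix `M`. -/
noncomputable def mvCLM {m n : ℕ} (M : Matrix (Fin m) (Fin n) ℝ) :
    (Fin n → ℝ) →L[ℝ] (Fin m → ℝ) :=
  LinearMap.toContinuousLinearMap M.mulVecLin

/-- The continuous linear functional `w ↦ g ⬝ᵥ w` given by a gradient (row) vector `g`. -/
noncomputable def dotCLM {n : ℕ} (g : Fin n → ℝ) : (Fin n → ℝ) →L[ℝ] ℝ :=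
  LinearMap.toContinuousLinearMap
    { toFun := fun w => g ⬝ᵥ w
      map_add' := by intro x y; simp [dotProduct_add]
      map_smul' := by intro c x; simp [dotProduct_smul] }

attribute [local instance] Matrix.normedAddCommGroup Matrix.normedSpace

@[simp] lemma dotCLM_apply {n : ℕ} (g w : Fin n → ℝ) : dotCLM g w = g ⬝ᵥ w := rfl

@[simp] lemma mvCLM_apply {m n : ℕ} (M : Matrix (Fin m) (Fin n) ℝ) (w : Fin n → ℝ) :
    mvCLM M w = M *ᵥ w := rfl

lemma dotCLM_comp_mvCLM {m n : ℕ} (g : Fin m → ℝ) (M : Matrix (Fin m) (Fin n) ℝ) :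
    (dotCLM g).comp (mvCLM M) = dotCLM (g ᵥ* M) := by
  apply ContinuousLinearMap.ext; intro w
  simp [Matrix.dotProduct_mulVec]

lemma dotCLM_add {n : ℕ} (x y : Fin n → ℝ) : dotCLM (x + y) = dotCLM x + dotCLM y := by
  apply ContinuousLinearMap.ext; intro w
  simp [add_dotProduct]

noncomputable def vecMulCLM {m n : ℕ} :
    (Fin m → ℝ) →L[ℝ] (Matrix (Fin m) (Fin n) ℝ →L[ℝ] (Fin n → ℝ)) :=
  LinearMap.toContinuousLinearMap
  { toFun := fun x => LinearMap.toContinuousLinearMap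
      { toFun := fun M => x ᵥ* M
        map_add' := by intro M N; simp [Matrix.vecMul_add]
        map_smul' := by
          intro c M
          funext j
          simp only [Matrix.vecMul, dotProduct, Matrix.smul_apply, Pi.smul_apply,
            smul_eq_mul, RingHom.id_apply, Finset.mul_sum]
          exact Finset.sum_congr rfl fun i _ => by ring }
    map_add' := by intro x y; apply ContinuousLinearMap.ext; intro M; simp [Matrix.add_vecMul]
    map_smul' := by
      intro c x
      apply ContinuousLinearMap.ext
      intro M
      show (c • x) ᵥ* M = c • (x ᵥ* M)
      funext j
      simp only [Matrix.vecMul, dotProduct, Pi.smul_apply, smul_eq_mul, Finset.mul_sum]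
      exact Finset.sum_congr rfl fun i _ => by ring }

@[simp] lemma vecMulCLM_apply {m n : ℕ} (x : Fin m → ℝ) (M : Matrix (Fin m) (Fin n) ℝ) :
    vecMulCLM x M = x ᵥ* M := rfl

noncomputable def dotCLML {n : ℕ} : (Fin n → ℝ) →L[ℝ] ((Fin n → ℝ) →L[ℝ] ℝ) :=
  LinearMap.toContinuousLinearMap
  { toFun := dotCLM
    map_add' := by intro x y; exact dotCLM_add x y
    map_smul' := by intro c x; apply ContinuousLinearMap.ext; intro w; simp [smul_dotProduct] }

@[simp] lemma dotCLML_apply {n : ℕ} (g : Fin n → ℝ) : dotCLML g = dotCLM g := rfl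


/-- **Generalized adjoint method (constant parameters, integral loss).**
For the Neural ODE `ż(s,θ) = f(s, z(s,θ), θ)`, `z(0,θ) = z₀`, with Jacobian
`v(s) = ∂z/∂θ(s,θ)` solving the variational equation, and adjoint state `a` solving the
final-value problem `a'ᵀ = -aᵀ (∂f/∂z) - ∂l/∂z`, `a(S)ᵀ = ∂L/∂z(z(S,θ))`, the gradient of
`ℓ(θ) = L(z(S,θ)) + ∫₀ˢ l(τ, z(τ,θ)) dτ` is `dℓ/dθ = ∫₀ˢ a(τ)ᵀ (∂f/∂θ)(τ, z(τ,θ), θ) dτ`. -/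
theorem generalized_adjoint_method
    {nz nθ : ℕ} {S : ℝ} (hS : 0 < S)
    (f : ℝ → (Fin nz → ℝ) → (Fin nθ → ℝ) → (Fin nz → ℝ))
    (hf : ContDiff ℝ 1 (fun p : ℝ × (Fin nz → ℝ) × (Fin nθ → ℝ) => f p.1 p.2.1 p.2.2))
    (θ : Fin nθ → ℝ) (z : ℝ → (Fin nθ → ℝ) → (Fin nz → ℝ)) (z₀ : Fin nz → ℝ)
    (hz : ContDiff ℝ 1 (fun p : ℝ × (Fin nθ → ℝ) => z p.1 p.2))
    (hode : ∀ s ∈ Set.Icc (0:ℝ) S, HasDerivAt (fun u => z u θ) (f s (z s θ) θ) s)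
    (hinit : ∀ θ' : Fin nθ → ℝ, z 0 θ' = z₀)
    -- Jacobians of `f` with respect to the state and the parameters, along the solution
    (Fz : ℝ → Matrix (Fin nz) (Fin nz) ℝ) (Fθ : ℝ → Matrix (Fin nz) (Fin nθ) ℝ)
    (hFz : ∀ s ∈ Set.Icc (0:ℝ) S, HasFDerivAt (fun w => f s w θ) (mvCLM (Fz s)) (z s θ))
    (hFθ : ∀ s ∈ Set.Icc (0:ℝ) S, HasFDerivAt (fun p => f s (z s θ) p) (mvCLM (Fθ s)) θ)
    -- `v(s) = ∂z/∂θ(s,θ)` satisfies the variational equation with `v 0 = 0`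
    (v : ℝ → Matrix (Fin nz) (Fin nθ) ℝ)
    (hv : ∀ s ∈ Set.Icc (0:ℝ) S, HasFDerivAt (fun p => z s p) (mvCLM (v s)) θ)
    (hvar : ∀ s ∈ Set.Icc (0:ℝ) S, HasDerivAt v (Fz s * v s + Fθ s) s)
    (hv0 : v 0 = 0)
    -- loss functions and their gradients
    (L : (Fin nz → ℝ) → ℝ) (l : ℝ → (Fin nz → ℝ) → ℝ)
    (hL : ContDiff ℝ 1 L)
    (hl : ContDiff ℝ 1 (fun p : ℝ × (Fin nz → ℝ) => l p.1 p.2))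
    (Lz : Fin nz → ℝ) (lz : ℝ → (Fin nz → ℝ))
    (hLz : HasFDerivAt L (dotCLM Lz) (z S θ))
    (hlz : ∀ s ∈ Set.Icc (0:ℝ) S, HasFDerivAt (fun w => l s w) (dotCLM (lz s)) (z s θ))
    -- the adjoint state
    (a : ℝ → (Fin nz → ℝ))
    (ha : ∀ s ∈ Set.Icc (0:ℝ) S, HasDerivAt a (-(a s ᵥ* Fz s) - lz s) s)
    (haS : a S = Lz) :
    HasFDerivAt (fun θ' : Fin nθ → ℝ => L (z S θ') + ∫ τ in (0:ℝ)..S, l τ (z τ θ'))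
      (dotCLM (∫ τ in (0:ℝ)..S, a τ ᵥ* Fθ τ)) θ := by
  have hS0 : (0:ℝ) ≤ S := hS.le
  have hmemS : S ∈ Set.Icc (0:ℝ) S := ⟨hS0, le_rfl⟩
  have huIcc : Set.uIcc (0:ℝ) S = Set.Icc 0 S := Set.uIcc_of_le hS0
  have huIoc : Set.uIoc (0:ℝ) S = Set.Ioc 0 S := Set.uIoc_of_le hS0
  have hzθ : Continuous fun s : ℝ => z s θ :=
    hz.continuous.comp (continuous_id.prodMk continuous_const)
  have ha_cont : ContinuousOn a (Set.Icc 0 S) := fun s hs =>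
    ((ha s hs).continuousAt).continuousWithinAt
  have hv_cont : ContinuousOn v (Set.Icc 0 S) := fun s hs =>
    ((hvar s hs).continuousAt).continuousWithinAt
  -- continuity of `lz` on `Icc 0 S`, via uniqueness of derivatives
  have hlz_eq : ∀ s ∈ Set.Icc (0:ℝ) S, lz s = fun j =>
      fderiv ℝ (fun p : ℝ × (Fin nz → ℝ) => l p.1 p.2) (s, z s θ) (0, Pi.single j 1) := by
    intro s hs
    have h1 : HasFDerivAt (fun w => l s w)
        ((fderiv ℝ (fun p : ℝ × (Fin nz → ℝ) => l p.1 p.2) (s, z s θ)).comp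
          (((0 : (Fin nz → ℝ) →L[ℝ] ℝ)).prod (ContinuousLinearMap.id ℝ _))) (z s θ) :=
      ((hl.differentiable one_ne_zero (s, z s θ)).hasFDerivAt).comp (z s θ)
        ((hasFDerivAt_const s _).prodMk (hasFDerivAt_id _))
    have h2 := (hlz s hs).unique h1
    funext j
    have h3 := congrArg (fun T : (Fin nz → ℝ) →L[ℝ] ℝ => T (Pi.single j 1)) h2
    simpa [dotProduct_single] using h3
  have hlz_cont : ContinuousOn lz (Set.Icc 0 S) := by
    have hcont : Continuous fun s : ℝ => fun j =>
        fderiv ℝ (fun p : ℝ × (Fin nz → ℝ) => l p.1 p.2) (s, z s θ) (0, Pi.single j 1) := by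
      apply continuous_pi
      intro j
      exact ((hl.continuous_fderiv one_ne_zero).comp
        (continuous_id.prodMk hzθ)).clm_apply continuous_const
    exact hcont.continuousOn.congr hlz_eq
  -- continuity of `Fθ` on `Icc 0 S`, via uniqueness of derivatives
  have hFθ_eq : ∀ s ∈ Set.Icc (0:ℝ) S, Fθ s = fun i j =>
      fderiv ℝ (fun p : ℝ × (Fin nz → ℝ) × (Fin nθ → ℝ) => f p.1 p.2.1 p.2.2)
        (s, z s θ, θ) (0, 0, Pi.single j 1) i := by
    intro s hs
    have h1 : HasFDerivAt (fun p => f s (z s θ) p)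
        ((fderiv ℝ (fun p : ℝ × (Fin nz → ℝ) × (Fin nθ → ℝ) => f p.1 p.2.1 p.2.2)
            (s, z s θ, θ)).comp
          (((0 : (Fin nθ → ℝ) →L[ℝ] ℝ)).prod
            (((0 : (Fin nθ → ℝ) →L[ℝ] (Fin nz → ℝ))).prod (ContinuousLinearMap.id ℝ _)))) θ :=
      by
        have hB := (hasFDerivAt_const s θ).prodMk ((hasFDerivAt_const (z s θ) θ).prodMk (hasFDerivAt_id (𝕜 := ℝ) θ))
        exact ((hf.differentiable one_ne_zero (s, z s θ, θ)).hasFDerivAt).comp θ hB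
    have h2 := (hFθ s hs).unique h1
    funext i j
    have h3 := congrArg (fun T : (Fin nθ → ℝ) →L[ℝ] (Fin nz → ℝ) => T (Pi.single j 1) i) h2
    simpa [Matrix.mulVec_single] using h3
  have hFθ_cont : ContinuousOn Fθ (Set.Icc 0 S) := by
    have hcont : Continuous fun s : ℝ => ((fun i j =>
        fderiv ℝ (fun p : ℝ × (Fin nz → ℝ) × (Fin nθ → ℝ) => f p.1 p.2.1 p.2.2)
          (s, z s θ, θ) (0, 0, Pi.single j 1) i) : Matrix (Fin nz) (Fin nθ) ℝ) := by
      apply continuous_pi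
      intro i
      apply continuous_pi
      intro j
      have hfd : Continuous fun s : ℝ =>
          fderiv ℝ (fun p : ℝ × (Fin nz → ℝ) × (Fin nθ → ℝ) => f p.1 p.2.1 p.2.2)
            (s, z s θ, θ) :=
        (hf.continuous_fderiv one_ne_zero).comp
          (continuous_id.prodMk (hzθ.prodMk continuous_const))
      exact (continuous_apply i).comp (hfd.clm_apply continuous_const)
    exact hcont.continuousOn.congr hFθ_eq
  -- derivative of the terminal term
  have hterm1 : HasFDerivAt (fun θ' => L (z S θ')) (dotCLM (Lz ᵥ* v S)) θ := by
    have h := hLz.comp θ (hv S hmemS)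
    rwa [dotCLM_comp_mvCLM] at h
  -- chain rule for the distributed term along the solution
  have key : ∀ τ ∈ Set.Icc (0:ℝ) S,
      HasFDerivAt (fun p => l τ (z τ p)) (dotCLM (lz τ ᵥ* v τ)) θ := by
    intro τ hτ
    have h := (hlz τ hτ).comp θ (hv τ hτ)
    rwa [dotCLM_comp_mvCLM] at h
  -- joint smoothness of the integrand
  have hΦ : ContDiff ℝ 1 (fun p : ℝ × (Fin nθ → ℝ) => l p.1 (z p.1 p.2)) :=
    hl.comp (contDiff_fst.prodMk hz)
  set J : (Fin nθ → ℝ) →L[ℝ] ℝ × (Fin nθ → ℝ) :=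
    ((0 : (Fin nθ → ℝ) →L[ℝ] ℝ)).prod (ContinuousLinearMap.id ℝ _) with hJdef
  set F' : (Fin nθ → ℝ) → ℝ → (Fin nθ → ℝ) →L[ℝ] ℝ :=
    fun x τ => (fderiv ℝ (fun p : ℝ × (Fin nθ → ℝ) => l p.1 (z p.1 p.2)) (τ, x)).comp J
    with hF'def
  have hdiffF : ∀ (τ : ℝ) (x : Fin nθ → ℝ),
      HasFDerivAt (fun y => l τ (z τ y)) (F' x τ) x := by
    intro τ x
    exact ((hΦ.differentiable one_ne_zero (τ, x)).hasFDerivAt).comp x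
      ((hasFDerivAt_const τ x).prodMk (hasFDerivAt_id x))
  have hF'cont : Continuous fun p : ℝ × (Fin nθ → ℝ) => F' p.2 p.1 := by
    have h1 : Continuous fun p : ℝ × (Fin nθ → ℝ) =>
        fderiv ℝ (fun q : ℝ × (Fin nθ → ℝ) => l q.1 (z q.1 q.2)) p :=
      hΦ.continuous_fderiv one_ne_zero
    exact (((ContinuousLinearMap.compL ℝ (Fin nθ → ℝ) (ℝ × (Fin nθ → ℝ)) ℝ).flip
      J).continuous).comp h1
  obtain ⟨C, hC⟩ := (isCompact_Icc.prod (isCompact_closedBall θ 1)).exists_bound_of_continuousOn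
    (s := Set.Icc (0:ℝ) S ×ˢ Metric.closedBall θ 1) hF'cont.continuousOn
  have h_bound : ∀ᵐ τ ∂(volume.restrict (Set.uIoc (0:ℝ) S)), ∀ x ∈ Metric.ball θ 1, ‖F' x τ‖ ≤ C := by
    rw [huIoc]
    filter_upwards [ae_restrict_mem measurableSet_Ioc] with τ hτ
    intro x hx
    exact hC (τ, x) ⟨Set.Ioc_subset_Icc_self hτ, Metric.ball_subset_closedBall hx⟩
  have hmain := hasFDerivAt_integral_of_dominated_of_fderiv_le''
    (F := fun x τ => l τ (z τ x)) (F' := F') (μ := volume) (a := 0) (b := S)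
    (bound := fun _ => C) (Metric.ball_mem_nhds θ one_pos)
    (Filter.Eventually.of_forall fun x =>
      ((hΦ.continuous.comp (continuous_id.prodMk continuous_const)).aestronglyMeasurable))
    ((hΦ.continuous.comp (continuous_id.prodMk continuous_const)).intervalIntegrable 0 S)
    ((hF'cont.comp (continuous_id.prodMk continuous_const)).aestronglyMeasurable)
    h_bound
    intervalIntegrable_const
    (Filter.Eventually.of_forall fun τ x _ => hdiffF τ x)
  -- identify the derivative of the distributed term
  have hgs_cont : ContinuousOn (fun τ => lz τ ᵥ* v τ) (Set.Icc 0 S) :=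
    ((vecMulCLM (m := nz) (n := nθ)).continuous.comp_continuousOn hlz_cont).clm_apply hv_cont
  have hint_g : IntegrableOn (fun τ => lz τ ᵥ* v τ) (Set.Ioc 0 S) volume :=
    (hgs_cont.integrableOn_Icc).mono_set Set.Ioc_subset_Icc_self
  have hder_eq : (∫ τ in (0:ℝ)..S, F' θ τ) = dotCLM (∫ τ in (0:ℝ)..S, lz τ ᵥ* v τ) := by
    have h1 : (∫ τ in (0:ℝ)..S, F' θ τ) = ∫ τ in (0:ℝ)..S, dotCLM (lz τ ᵥ* v τ) := by
      apply intervalIntegral.integral_congr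
      intro τ hτ
      rw [huIcc] at hτ
      exact (hdiffF τ θ).unique (key τ hτ)
    rw [h1, intervalIntegral.integral_of_le hS0, intervalIntegral.integral_of_le hS0]
    calc ∫ τ in Set.Ioc (0:ℝ) S, dotCLM (lz τ ᵥ* v τ)
        = ∫ τ in Set.Ioc (0:ℝ) S, dotCLML (lz τ ᵥ* v τ) := by simp
      _ = dotCLML (∫ τ in Set.Ioc (0:ℝ) S, lz τ ᵥ* v τ) := dotCLML.integral_comp_comm hint_g
      _ = _ := by simp
  rw [hder_eq] at hmain
  -- the fundamental theorem of calculus applied to `s ↦ a s ᵥ* v s`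
  have hφder : ∀ s ∈ Set.uIcc (0:ℝ) S,
      HasDerivAt (fun u => a u ᵥ* v u) (a s ᵥ* Fθ s - lz s ᵥ* v s) s := by
    intro s hs
    rw [huIcc] at hs
    have h1 : HasDerivAt (fun u => vecMulCLM (m := nz) (n := nθ) (a u))
        (vecMulCLM (-(a s ᵥ* Fz s) - lz s)) s :=
      by
        letI : NormedAddCommGroup (Matrix (Fin nz) (Fin nθ) ℝ →L[ℝ] (Fin nθ → ℝ)) :=
          ContinuousLinearMap.toNormedAddCommGroup
        letI : NormedSpace ℝ (Matrix (Fin nz) (Fin nθ) ℝ →L[ℝ] (Fin nθ → ℝ)) :=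
          ContinuousLinearMap.toNormedSpace
        exact (vecMulCLM (m := nz) (n := nθ)).hasFDerivAt.comp_hasDerivAt s (ha s hs)
    have h2 := h1.clm_apply (hvar s hs)
    have h3 : vecMulCLM (-(a s ᵥ* Fz s) - lz s) (v s)
        + vecMulCLM (a s) (Fz s * v s + Fθ s) = a s ᵥ* Fθ s - lz s ᵥ* v s := by
      simp only [vecMulCLM_apply, Matrix.sub_vecMul, Matrix.neg_vecMul, Matrix.vecMul_add,
        ← Matrix.vecMul_vecMul]
      abel
    replace h2 := h2.congr_deriv h3
    exact h2
  have hIθint : IntervalIntegrable (fun τ => a τ ᵥ* Fθ τ) volume 0 S := by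
    apply ContinuousOn.intervalIntegrable
    rw [huIcc]
    exact ((vecMulCLM (m := nz) (n := nθ)).continuous.comp_continuousOn ha_cont).clm_apply
      hFθ_cont
  have hIlzint : IntervalIntegrable (fun τ => lz τ ᵥ* v τ) volume 0 S := by
    apply ContinuousOn.intervalIntegrable
    rw [huIcc]
    exact hgs_cont
  have hftc : (∫ τ in (0:ℝ)..S, (a τ ᵥ* Fθ τ - lz τ ᵥ* v τ)) = Lz ᵥ* v S := by
    rw [intervalIntegral.integral_eq_sub_of_hasDerivAt hφder (hIθint.sub hIlzint)]
    simp [haS, hv0]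
  have hsplit : (∫ τ in (0:ℝ)..S, a τ ᵥ* Fθ τ)
      = (Lz ᵥ* v S) + ∫ τ in (0:ℝ)..S, lz τ ᵥ* v τ := by
    rw [← hftc, intervalIntegral.integral_sub hIθint hIlzint]
    abel
  rw [hsplit, dotCLM_add]
  exact hterm1.add hmain
end

section
/- Spectral (Galerkin) gradients: Under the setting of the infinite-dimensional gradient theorem, let the depth-varying parameter be the truncated series θ(s) = Σ_{j=1}^m α_j ⊙ ψ_j(s), where ψ_1, …, ψ_m : [0,S] → ℝ^{n_θ} are fixed continuous basis functions, α_j ∈ ℝ^{n_θ} are coefficient vectors, and ⊙ is the componentwise (Hadamard) product. Suppose z : [0,S] × ℝ^{m·n_θ} → ℝ^{n_z} is continuously differentiable in (s,α), solves ∂z/∂s(s,α) = f(s, z(s,α), θ(s)) with z(0,α) = z₀ independent of α, and for each j and each coordinate k the partial derivative v_{j,k}(s) = ∂z(s,α)/∂(α_j)_k satisfies the variational equation v'_{j,k}(s) = (∂f/∂z) v_{j,k}(s) + (∂f/∂θ) e_k (ψ_j(s))_k with v_{j,k}(0) = 0 (e_k the k-th standard basis vector of ℝ^{n_θ}, all Jacobians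 evaluated at (s, z(s,α), θ(s))). Define ℓ(α) = L(z(S,α)) + ∫₀ᔆ l(τ, z(τ,α)) dτ and let a satisfy the adjoint final-value problem a'ᵀ = −aᵀ (∂f/∂z) − (∂l/∂z), a(S)ᵀ = (∂L/∂z)(z(S,α)). Then for every j and k, ∂ℓ/∂(α_j)_k = ∫₀ᔆ a(τ)ᵀ (∂f/∂θ)(τ, z(τ,α), θ(τ)) e_k (ψ_j(τ))_k dτ. -/
open MeasureTheory Matrix

/-- The standard basis direction `e_{j,k}` in the coefficient space `(ℝ^{nθ})^m`. -/
def coordDir {m n : ℕ} (j : Fin m) (k : Fin n) : Fin m → (Fin n → ℝ) :=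
  Pi.single j (Pi.single k (1:ℝ))

lemma hasDerivAt_dot {n : ℕ} {A V : ℝ → Fin n → ℝ} {A' V' : Fin n → ℝ} {s : ℝ}
    (hA : HasDerivAt A A' s) (hV : HasDerivAt V V' s) :
    HasDerivAt (fun u => A u ⬝ᵥ V u) (A' ⬝ᵥ V s + A s ⬝ᵥ V') s := by
  simp only [dotProduct, ← Finset.sum_add_distrib]
  exact HasDerivAt.fun_sum fun i _ =>
    ((hasDerivAt_pi.1 hA i).mul (hasDerivAt_pi.1 hV i))

lemma contOn_dot {n : ℕ} {s : Set ℝ} {A V : ℝ → Fin n → ℝ}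
    (hA : ContinuousOn A s) (hV : ContinuousOn V s) :
    ContinuousOn (fun u => A u ⬝ᵥ V u) s := by
  simp only [dotProduct]
  exact continuousOn_finset_sum _ fun i _ =>
    (((continuous_apply i).comp_continuousOn hA).mul
      ((continuous_apply i).comp_continuousOn hV))

lemma cont_single {n : ℕ} (k : Fin n) :
    Continuous (fun c : ℝ => (Pi.single k c : Fin n → ℝ)) := by
  refine continuous_pi fun i => ?_
  simp only [Pi.single_apply]
  split_ifs
  · exact continuous_id
  · exact continuous_const

/-- **Spectral (Galerkin) gradients.**  With the depth-varying parameter given by the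
truncated expansion `θ(s) = ∑ⱼ αⱼ ⊙ ψⱼ(s)` on fixed continuous basis functions `ψⱼ`, for
every coefficient coordinate `(α_j)_k` the partial derivative of the loss
`ℓ(α) = L(z(S,α)) + ∫₀ˢ l(τ, z(τ,α)) dτ` is
`∂ℓ/∂(α_j)_k = ∫₀ˢ a(τ)ᵀ (∂f/∂θ)(τ, z(τ,α), θ(τ)) e_k (ψ_j(τ))_k dτ`. -/
theorem spectral_galerkin_gradients
    {nz nθ : ℕ} (m : ℕ) {S : ℝ} (hS : 0 < S)
    (f : ℝ → (Fin nz → ℝ) → (Fin nθ → ℝ) → (Fin nz → ℝ))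
    (hf : ContDiff ℝ 1 (fun p : ℝ × (Fin nz → ℝ) × (Fin nθ → ℝ) => f p.1 p.2.1 p.2.2))
    -- basis functions and coefficients of the truncated series
    (ψ : Fin m → ℝ → (Fin nθ → ℝ)) (hψ : ∀ j, ContinuousOn (ψ j) (Set.Icc 0 S))
    (α : Fin m → (Fin nθ → ℝ))
    (θ : ℝ → (Fin nθ → ℝ))
    (hθ : ∀ s : ℝ, θ s = fun k => ∑ j : Fin m, α j k * ψ j s k)
    (z : ℝ → (Fin m → (Fin nθ → ℝ)) → (Fin nz → ℝ)) (z₀ : Fin nz → ℝ)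
    (hz : ContDiff ℝ 1 (fun p : ℝ × (Fin m → (Fin nθ → ℝ)) => z p.1 p.2))
    (hode : ∀ s ∈ Set.Icc (0:ℝ) S, HasDerivAt (fun u => z u α) (f s (z s α) (θ s)) s)
    (hinit : ∀ α' : Fin m → (Fin nθ → ℝ), z 0 α' = z₀)
    -- Jacobians of `f` along the solution
    (Fz : ℝ → Matrix (Fin nz) (Fin nz) ℝ) (Fθ : ℝ → Matrix (Fin nz) (Fin nθ) ℝ)
    (hFz : ∀ s ∈ Set.Icc (0:ℝ) S, HasFDerivAt (fun w => f s w (θ s)) (mvCLM (Fz s)) (z s α))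
    (hFθ : ∀ s ∈ Set.Icc (0:ℝ) S, HasFDerivAt (fun p => f s (z s α) p) (mvCLM (Fθ s)) (θ s))
    -- partial derivatives `v j k (s) = ∂z(s,α)/∂(α_j)_k` satisfy the variational equations
    (v : Fin m → Fin nθ → ℝ → (Fin nz → ℝ))
    (hv : ∀ (j : Fin m) (k : Fin nθ), ∀ s ∈ Set.Icc (0:ℝ) S,
      HasDerivAt (fun t : ℝ => z s (α + t • coordDir j k)) (v j k s) 0)
    (hvar : ∀ (j : Fin m) (k : Fin nθ), ∀ s ∈ Set.Icc (0:ℝ) S,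
      HasDerivAt (v j k) (Fz s *ᵥ v j k s + Fθ s *ᵥ Pi.single k (ψ j s k)) s)
    (hv0 : ∀ (j : Fin m) (k : Fin nθ), v j k 0 = 0)
    -- loss functions and their gradients
    (L : (Fin nz → ℝ) → ℝ) (l : ℝ → (Fin nz → ℝ) → ℝ)
    (hL : ContDiff ℝ 1 L)
    (hl : ContDiff ℝ 1 (fun p : ℝ × (Fin nz → ℝ) => l p.1 p.2))
    (Lz : Fin nz → ℝ) (lz : ℝ → (Fin nz → ℝ))
    (hLz : HasFDerivAt L (dotCLM Lz) (z S α))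
    (hlz : ∀ s ∈ Set.Icc (0:ℝ) S, HasFDerivAt (fun w => l s w) (dotCLM (lz s)) (z s α))
    -- the adjoint state
    (a : ℝ → (Fin nz → ℝ))
    (ha : ∀ s ∈ Set.Icc (0:ℝ) S, HasDerivAt a (-(a s ᵥ* Fz s) - lz s) s)
    (haS : a S = Lz) :
    ∀ (j : Fin m) (k : Fin nθ),
      HasDerivAt
        (fun t : ℝ =>
          L (z S (α + t • coordDir j k)) +
            ∫ τ in (0:ℝ)..S, l τ (z τ (α + t • coordDir j k)))
        (∫ τ in (0:ℝ)..S, a τ ⬝ᵥ (Fθ τ *ᵥ Pi.single k (ψ j τ k))) 0 := by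
  intro j k
  set e := coordDir j k with he
  set vb := v j k with hvb
  have hSIcc : Set.uIcc (0:ℝ) S = Set.Icc 0 S := Set.uIcc_of_le hS.le
  have hSIoc : Set.uIoc (0:ℝ) S = Set.Ioc 0 S := Set.uIoc_of_le hS.le
  have h0e : α + (0:ℝ) • e = α := by simp
  -- basic continuity
  have czα : Continuous (fun s => z s α) :=
    hz.continuous.comp (continuous_id.prodMk continuous_const)
  have cθ : ContinuousOn θ (Set.Icc 0 S) := by
    have : ContinuousOn (fun s => fun k' => ∑ j' : Fin m, α j' k' * ψ j' s k')
        (Set.Icc 0 S) := by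
      refine continuousOn_pi.2 fun k' => continuousOn_finset_sum _ fun j' _ => ?_
      exact continuousOn_const.mul ((continuous_apply k').comp_continuousOn (hψ j'))
    exact this.congr fun s _ => hθ s
  have cw : ContinuousOn (fun s => (Pi.single k (ψ j s k) : Fin nθ → ℝ)) (Set.Icc 0 S) :=
    (cont_single k).comp_continuousOn ((continuous_apply k).comp_continuousOn (hψ j))
  have ca : ContinuousOn a (Set.Icc 0 S) := fun s hs =>
    ((ha s hs).continuousAt).continuousWithinAt
  have cv : ContinuousOn vb (Set.Icc 0 S) := fun s hs =>
    ((hvar j k s hs).continuousAt).continuousWithinAt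
  -- identification of lz with the full derivative of l
  have hQeq : ∀ s ∈ Set.Icc (0:ℝ) S, ∀ u : Fin nz → ℝ,
      lz s ⬝ᵥ u = fderiv ℝ (fun p : ℝ × (Fin nz → ℝ) => l p.1 p.2) (s, z s α) ((0:ℝ), u) := by
    intro s hs u
    have hemb : HasFDerivAt (fun w : Fin nz → ℝ => ((s, w) : ℝ × (Fin nz → ℝ)))
        (((0 : (Fin nz → ℝ) →L[ℝ] ℝ)).prod (ContinuousLinearMap.id ℝ _)) (z s α) :=
      (hasFDerivAt_const s _).prodMk (hasFDerivAt_id _)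
    have h2 := ((hl.differentiable one_ne_zero) (s, z s α)).hasFDerivAt.comp (z s α) hemb
    have h3 := (hlz s hs).unique h2
    calc lz s ⬝ᵥ u = dotCLM (lz s) u := rfl
      _ = _ := by rw [h3]; rfl
  -- identification of Fθ with the full derivative of f
  have hFeq : ∀ s ∈ Set.Icc (0:ℝ) S, ∀ u : Fin nθ → ℝ,
      Fθ s *ᵥ u = fderiv ℝ (fun p : ℝ × (Fin nz → ℝ) × (Fin nθ → ℝ) => f p.1 p.2.1 p.2.2)
        (s, z s α, θ s) ((0:ℝ), (0 : Fin nz → ℝ), u) := by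
    intro s hs u
    have hemb : HasFDerivAt (fun p : Fin nθ → ℝ =>
        ((s, z s α, p) : ℝ × (Fin nz → ℝ) × (Fin nθ → ℝ)))
        (((0 : (Fin nθ → ℝ) →L[ℝ] ℝ)).prod
          (((0 : (Fin nθ → ℝ) →L[ℝ] (Fin nz → ℝ))).prod (ContinuousLinearMap.id ℝ _))) (θ s) :=
      (hasFDerivAt_const _ _).prodMk ((hasFDerivAt_const _ _).prodMk (hasFDerivAt_id _))
    have h2 := ((hf.differentiable one_ne_zero) (s, z s α, θ s)).hasFDerivAt.comp (θ s) hemb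
    have h3 := (hFθ s hs).unique h2
    calc Fθ s *ᵥ u = mvCLM (Fθ s) u := rfl
      _ = _ := by rw [h3]; rfl
  -- the two integrands
  set P : ℝ → ℝ := fun s => a s ⬝ᵥ (Fθ s *ᵥ Pi.single k (ψ j s k)) with hP
  set Q : ℝ → ℝ := fun s => lz s ⬝ᵥ vb s with hQ
  have cFw : ContinuousOn (fun s => Fθ s *ᵥ (Pi.single k (ψ j s k) : Fin nθ → ℝ))
      (Set.Icc 0 S) := by
    have base : ContinuousOn (fun s => fderiv ℝ
        (fun p : ℝ × (Fin nz → ℝ) × (Fin nθ → ℝ) => f p.1 p.2.1 p.2.2) (s, z s α, θ s))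
        (Set.Icc 0 S) :=
      (hf.continuous_fderiv one_ne_zero).comp_continuousOn
        ((continuous_id.continuousOn).prodMk ((czα.continuousOn).prodMk cθ))
    have harg : ContinuousOn (fun s => (((0:ℝ), (0 : Fin nz → ℝ), Pi.single k (ψ j s k))) :
        ℝ → ℝ × (Fin nz → ℝ) × (Fin nθ → ℝ)) (Set.Icc 0 S) :=
      continuousOn_const.prodMk (continuousOn_const.prodMk cw)
    have := base.clm_apply harg
    exact this.congr fun s hs => hFeq s hs _
  have cP : ContinuousOn P (Set.Icc 0 S) := contOn_dot ca cFw
  have cQ : ContinuousOn Q (Set.Icc 0 S) := by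
    have base : ContinuousOn (fun s => fderiv ℝ
        (fun p : ℝ × (Fin nz → ℝ) => l p.1 p.2) (s, z s α)) (Set.Icc 0 S) :=
      (hl.continuous_fderiv one_ne_zero).comp_continuousOn
        ((continuous_id.continuousOn).prodMk czα.continuousOn)
    have harg : ContinuousOn (fun s => (((0:ℝ), vb s)) : ℝ → ℝ × (Fin nz → ℝ))
        (Set.Icc 0 S) := continuousOn_const.prodMk cv
    have := base.clm_apply harg
    exact this.congr fun s hs => hQeq s hs _
  have iP : IntervalIntegrable P volume 0 S :=
    ContinuousOn.intervalIntegrable (by rw [hSIcc]; exact cP)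
  have iQ : IntervalIntegrable Q volume 0 S :=
    ContinuousOn.intervalIntegrable (by rw [hSIcc]; exact cQ)
  -- FTC for the adjoint pairing
  have hg : ∀ s ∈ Set.uIcc (0:ℝ) S, HasDerivAt (fun u => a u ⬝ᵥ vb u) (P s - Q s) s := by
    intro s hs
    rw [hSIcc] at hs
    have hd := hasDerivAt_dot (ha s hs) (hvar j k s hs)
    convert hd using 1
    simp only [hP, hQ, sub_dotProduct, neg_dotProduct, dotProduct_add,
      Matrix.dotProduct_mulVec]
    ring
  have hFTC := intervalIntegral.integral_eq_sub_of_hasDerivAt hg (iP.sub iQ)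
  rw [intervalIntegral.integral_sub iP iQ] at hFTC
  have hkey : (∫ τ in (0:ℝ)..S, P τ) = Lz ⬝ᵥ vb S + ∫ τ in (0:ℝ)..S, Q τ := by
    have h0 : a 0 ⬝ᵥ vb 0 = 0 := by rw [hvb, hv0 j k]; simp
    rw [haS] at hFTC
    rw [h0] at hFTC
    linarith [hFTC]
  -- derivative of the terminal term
  have hA : HasDerivAt (fun t : ℝ => L (z S (α + t • e))) (Lz ⬝ᵥ vb S) 0 := by
    have hLz' : HasFDerivAt L (dotCLM Lz) (z S (α + (0:ℝ) • e)) := by rw [h0e]; exact hLz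
    exact hLz'.comp_hasDerivAt 0 (hv j k S ⟨hS.le, le_rfl⟩)
  -- derivative of the integral term
  have hHf : ContDiff ℝ 1 (fun p : ℝ × ℝ => l p.2 (z p.2 (α + p.1 • e))) := by
    have h2 : ContDiff ℝ 1 (fun p : ℝ × ℝ => z p.2 (α + p.1 • e)) :=
      hz.comp (contDiff_snd.prodMk (contDiff_const.add (contDiff_fst.smul contDiff_const)))
    exact hl.comp (contDiff_snd.prodMk h2)
  have hHd : Differentiable ℝ (fun p : ℝ × ℝ => l p.2 (z p.2 (α + p.1 • e))) :=
    hHf.differentiable one_ne_zero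
  set D : ℝ × ℝ → ℝ :=
    fun p => fderiv ℝ (fun q : ℝ × ℝ => l q.2 (z q.2 (α + q.1 • e))) p ((1:ℝ), (0:ℝ)) with hD
  have cD : Continuous D := (hHf.continuous_fderiv one_ne_zero).clm_apply continuous_const
  have hDderiv : ∀ (x τ : ℝ),
      HasDerivAt (fun u => l τ (z τ (α + u • e))) (D (x, τ)) x := fun x τ =>
    by have := (hHd (x, τ)).hasFDerivAt.comp_hasDerivAt x ((hasDerivAt_id x).prodMk (hasDerivAt_const x τ)); exact this
  obtain ⟨C, hC⟩ := ((isCompact_Icc (a := (-1:ℝ)) (b := 1)).prod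
    (isCompact_Icc (a := (0:ℝ)) (b := S))).exists_bound_of_continuousOn cD.continuousOn
  have hB := intervalIntegral.hasDerivAt_integral_of_dominated_loc_of_deriv_le
    (F := fun x τ => l τ (z τ (α + x • e))) (F' := fun x τ => D (x, τ))
    (bound := fun _ => C) (μ := volume) (a := 0) (b := S) (x₀ := (0:ℝ)) (s := Metric.ball 0 1) (Metric.ball_mem_nhds _ one_pos)
    (Filter.Eventually.of_forall fun x =>
      ((hHf.continuous.comp (continuous_const.prodMk continuous_id))).aestronglyMeasurable)
    ((hHf.continuous.comp (continuous_const.prodMk continuous_id)).intervalIntegrable 0 S)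
    ((cD.comp (continuous_const.prodMk continuous_id)).aestronglyMeasurable)
    (Filter.Eventually.of_forall fun τ hτ x hx => by
      refine hC (x, τ) ⟨?_, ?_⟩
      · have : |x| < 1 := by simpa [Real.dist_eq] using hx
        exact ⟨by linarith [abs_lt.1 this |>.1], le_of_lt (abs_lt.1 this).2⟩
      · rw [hSIoc] at hτ
        exact ⟨hτ.1.le, hτ.2⟩)
    intervalIntegrable_const
    (Filter.Eventually.of_forall fun τ _ x _ => hDderiv x τ)
  have hDQ : Set.EqOn (fun τ => D ((0:ℝ), τ)) Q (Set.uIcc (0:ℝ) S) := by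
    rw [hSIcc]
    intro τ hτ
    have h1 : HasDerivAt (fun x : ℝ => l τ (z τ (α + x • e))) (D (0, τ)) 0 := hDderiv 0 τ
    have hlz' : HasFDerivAt (fun w => l τ w) (dotCLM (lz τ)) (z τ (α + (0:ℝ) • e)) := by
      rw [h0e]; exact hlz τ hτ
    have h2 : HasDerivAt (fun x : ℝ => l τ (z τ (α + x • e))) (lz τ ⬝ᵥ vb τ) 0 :=
      by have := hlz'.comp_hasDerivAt 0 (hv j k τ hτ); exact this
    exact h1.unique h2
  have hB2 : HasDerivAt (fun t : ℝ => ∫ τ in (0:ℝ)..S, l τ (z τ (α + t • e)))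
      (∫ τ in (0:ℝ)..S, Q τ) 0 := by
    have := hB.2
    rwa [intervalIntegral.integral_congr hDQ] at this
  have hfin := hA.add hB2
  rw [← hkey] at hfin
  exact hfin
end

section
/- Data-controlled approximation of the reflection map: For all ε > 0 and all x ∈ ℝ with x ≠ 0, there exists a parameter θ > 0 (namely any θ > −ln(ε / (2|x|))) such that |φ(x) − z(1)| < ε, where φ(x) = −x is the reflection map and z : [0,1] → ℝ is the unique solution of the data-controlled linear ODE ż(s) = −θ (z(s) + x) with initial condition z(0) = x. -/
open Real

theorem aux_key (ε : ℝ) (hε : 0 < ε) (x : ℝ) (hx : x ≠ 0) :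
    ∀ θ : ℝ, -Real.log (ε / (2 * |x|)) < θ →
      ∀ z : ℝ → ℝ, z 0 = x →
        (∀ s ∈ Set.Icc (0:ℝ) 1, HasDerivAt z (-θ * (z s + x)) s) →
        |(-x) - z 1| < ε := by
  have hx2 : (0:ℝ) < 2 * |x| := by positivity
  intro θ hθ z hz0 hderiv
  set w : ℝ → ℝ := fun s => (z s + x) * Real.exp (θ * s) with hw
  have hw' : ∀ s ∈ Set.Icc (0:ℝ) 1, HasDerivAt w 0 s := by
    intro s hs
    have h1 : HasDerivAt (fun s => θ * s) θ s := by
      simpa using (hasDerivAt_id s).const_mul θ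
    have h2 : HasDerivAt (fun y => (z y + x) * Real.exp (θ * y)) _ s :=
      ((hderiv s hs).add_const x).mul h1.exp
    convert h2 using 1
    ring
  have hconst := constant_of_has_deriv_right_zero
    (f := w) (a := (0:ℝ)) (b := 1)
    (fun s hs => (hw' s hs).continuousAt.continuousWithinAt)
    (fun s hs => (hw' s (Set.mem_Icc_of_Ico hs)).hasDerivWithinAt)
  have hw1 : w 1 = w 0 := hconst 1 (by norm_num)
  have hz1 : z 1 = 2 * x * Real.exp (-θ) - x := by
    have h : (z 1 + x) * Real.exp (θ * 1) = (z 0 + x) * Real.exp (θ * 0) := hw1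
    rw [hz0] at h
    simp only [mul_one, mul_zero, Real.exp_zero] at h
    have hep : Real.exp θ ≠ 0 := (Real.exp_pos θ).ne'
    have : z 1 + x = (x + x) / Real.exp θ := by
      field_simp at h ⊢; linarith
    rw [Real.exp_neg, eq_sub_iff_add_eq, this, div_eq_mul_inv]
    ring
  have hexp : Real.exp (-θ) < ε / (2 * |x|) := by
    have : Real.exp (-θ) < Real.exp (Real.log (ε / (2 * |x|))) :=
      Real.exp_lt_exp.mpr (by linarith)
    rwa [Real.exp_log (by positivity)] at this
  have habs : |(-x) - z 1| = 2 * |x| * Real.exp (-θ) := by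
    rw [hz1]
    have : (-x) - (2 * x * Real.exp (-θ) - x) = -(2 * x * Real.exp (-θ)) := by ring
    rw [this, abs_neg, abs_mul, abs_of_pos (Real.exp_pos _), abs_mul]
    simp [abs_of_pos, mul_assoc]
  rw [habs]
  calc 2 * |x| * Real.exp (-θ) < 2 * |x| * (ε / (2 * |x|)) := by
        exact mul_lt_mul_of_pos_left hexp hx2
    _ = ε := by field_simp

/-- **Data-controlled approximation of the reflection map.**  For every `ε > 0` and every
nonzero input `x`, there is a parameter `θ > 0` (namely, any `θ > -log (ε / (2|x|))` works)
such that the solution of the data-controlled ODE `ż = -θ (z + x)`, `z 0 = x` on `[0,1]`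
satisfies `|φ(x) - z 1| < ε` where `φ(x) = -x` is the reflection map. -/
theorem data_controlled_reflection (ε : ℝ) (hε : 0 < ε) (x : ℝ) (hx : x ≠ 0) :
    (∀ θ : ℝ, 0 < θ → -Real.log (ε / (2 * |x|)) < θ →
      ∀ z : ℝ → ℝ, z 0 = x →
        (∀ s ∈ Set.Icc (0:ℝ) 1, HasDerivAt z (-θ * (z s + x)) s) →
        |(-x) - z 1| < ε) ∧
    ∃ θ : ℝ, 0 < θ ∧
      ∀ z : ℝ → ℝ, z 0 = x →
        (∀ s ∈ Set.Icc (0:ℝ) 1, HasDerivAt z (-θ * (z s + x)) s) →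
        |(-x) - z 1| < ε := by
  refine ⟨fun θ _ hθ => aux_key ε hε x hx θ hθ, ?_⟩
  refine ⟨max 1 (-Real.log (ε / (2 * |x|)) + 1), lt_of_lt_of_le one_pos (le_max_left _ _), ?_⟩
  exact aux_key ε hε x hx _ (lt_of_lt_of_le (by linarith) (le_max_right _ _))
end

section
/- Exact error of the data-controlled linear model at depth one: For any x, θ ∈ ℝ, if z : [0,1] → ℝ is differentiable with z'(s) = −θ(z(s) + x) and z(0) = x, then the approximation error to the reflection map φ(x) = −x satisfies |φ(x) − z(1)| = 2 |x| e^{−θ}. -/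
open Real

/-- **Exact approximation error of the data-controlled linear model at depth one.**
If `z` solves `ż = -θ (z + x)`, `z 0 = x` on `[0,1]`, then the error with respect to
the reflection map `φ(x) = -x` is exactly `|φ(x) - z 1| = 2 |x| e^{-θ}`. -/
theorem data_controlled_exact_error (x θ : ℝ) (z : ℝ → ℝ)
    (hz0 : z 0 = x)
    (hz : ∀ s ∈ Set.Icc (0:ℝ) 1, HasDerivAt z (-θ * (z s + x)) s) :
    |(-x) - z 1| = 2 * |x| * Real.exp (-θ) := by
  set g : ℝ → ℝ := fun s => (z s + x) * Real.exp (θ * s) with hg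
  have hderiv : ∀ s ∈ Set.Icc (0:ℝ) 1, HasDerivAt g 0 s := by
    intro s hs
    have h1 : HasDerivAt (fun t => z t + x) (-θ * (z s + x)) s := (hz s hs).add_const x
    have h2 : HasDerivAt (fun t => Real.exp (θ * t)) (θ * Real.exp (θ * s)) s := by
      have := (Real.hasDerivAt_exp (θ * s)).comp s ((hasDerivAt_id s).const_mul θ)
      simpa [mul_comm, Function.comp_def] using this
    have : HasDerivAt g _ s := h1.mul h2
    convert this using 1
    ring
  have hconst : ∀ s ∈ Set.Icc (0:ℝ) 1, g s = g 0 := by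
    intro s hs
    apply constant_of_has_deriv_right_zero (f := g) (a := 0) (b := 1)
    · exact fun t ht => ((hderiv t ht).continuousAt).continuousWithinAt
    · intro t ht
      exact (hderiv t (Set.mem_Icc_of_Ico ht)).hasDerivWithinAt
    · exact hs
  have h1 : g 1 = g 0 := hconst 1 (by norm_num)
  have hg0 : g 0 = 2 * x := by simp [hg, hz0]; ring
  have hg1 : (z 1 + x) * Real.exp θ = 2 * x := by
    have := h1; simp [hg] at this; rw [this, hz0]; ring
  have hz1 : z 1 + x = 2 * x * Real.exp (-θ) := by
    have he : Real.exp θ ≠ 0 := Real.exp_ne_zero θ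
    rw [Real.exp_neg]
    field_simp [Real.exp_neg]
    linarith [hg1]
  have : (-x) - z 1 = -(z 1 + x) := by ring
  rw [this, abs_neg, hz1]
  rw [abs_mul, abs_mul]
  rw [abs_of_pos (Real.exp_pos (-θ))]
  rw [abs_two]
end
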